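/- Let d ≥ 2, r > 0, and let F : C → ℝ^d be continuous and satisfy the local Lipschitz condition: for every M > 0 there exists K > 0 such that ‖F(ψ₁) − F(ψ₂)‖ ≤ K‖ψ₁ − ψ₂‖_C whenever ‖ψ₁‖_C ≤ M and ‖ψ₂‖_C ≤ M. Assume moreover that for every ψ ∈ C with ψ(θ) ∈ Δ_d for all θ ∈ [−r,0]: (i) F_i(ψ) ≥ 0 whenever the i-th component of ψ(0) is 0, and (ii) ∑_{i=1}^d F_i(ψ) = 0. Then for every φ ∈ C with φ(θ) ∈ Δ_d for all θ ∈ [−r,0] there exists a unique continuous function x : [−r,∞) → ℝ^d such that x(θ) = φ(θ) for θ ∈ [−r,0], x is differentiable on (0,∞) with x′(t) = F(x_t) for all t > 0, and moreover x(t) ∈ Δ_d for all t ≥ 0. -/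

import Mathlib

open Set

/-- The segment of `z` at time `s`: `θ ↦ z(s+θ)`, with `θ` clamped to the delay window
`[-r, 0]` (so that the segment represents an element of `C([-r,0], ℝ^d)`). -/
def seg {d : ℕ} (r : ℝ) (z : ℝ → Fin d → ℝ) (s : ℝ) : ℝ → Fin d → ℝ :=
  fun θ => z (s + max (min θ 0) (-r))

namespace DelayODE

/-- clamp a real number to `[0,1]`. -/
def clamp01 (a : ℝ) : ℝ := max (min a 1) 0

lemma clamp01_nonneg (a : ℝ) : 0 ≤ clamp01 a := le_max_right _ _

lemma clamp01_le_one (a : ℝ) : clamp01 a ≤ 1 := by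
  unfold clamp01
  rcases le_total a 1 with h | h <;> simp [min_def, max_def] <;> split_ifs <;> linarith

lemma clamp01_eq_self {a : ℝ} (h0 : 0 ≤ a) (h1 : a ≤ 1) : clamp01 a = a := by
  unfold clamp01; rw [min_eq_left h1, max_eq_left h0]

lemma abs_clamp01_sub (a b : ℝ) : |clamp01 a - clamp01 b| ≤ |a - b| := by
  calc |clamp01 a - clamp01 b| ≤ |min a 1 - min b 1| := abs_max_sub_max_le_abs _ _ _
    _ ≤ max |a - b| |(1:ℝ) - 1| := abs_min_sub_min_le_max _ _ _ _
    _ ≤ |a - b| := by simp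

lemma continuous_clamp01 : Continuous clamp01 :=
  (continuous_id.min continuous_const).max continuous_const

/-- componentwise clamp to the cube `[0,1]^d`. -/
def clampE {d : ℕ} (v : Fin d → ℝ) : Fin d → ℝ := fun i => clamp01 (v i)

lemma continuous_clampE {d : ℕ} : Continuous (clampE (d := d)) := by
  refine continuous_pi fun i => continuous_clamp01.comp (continuous_apply i)

lemma norm_clampE_le_one {d : ℕ} (v : Fin d → ℝ) : ‖clampE v‖ ≤ 1 := by
  refine (pi_norm_le_iff_of_nonneg zero_le_one).2 fun i => ?_
  rw [Real.norm_eq_abs, abs_le]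
  refine ⟨?_, clamp01_le_one (v i)⟩
  have := clamp01_nonneg (v i)
  show -1 ≤ clamp01 (v i)
  linarith

lemma norm_clampE_sub_le {d : ℕ} (v w : Fin d → ℝ) : ‖clampE v - clampE w‖ ≤ ‖v - w‖ := by
  rcases eq_or_ne d 0 with hd | hd
  · subst hd; simp [Subsingleton.elim (clampE v - clampE w) 0, norm_nonneg]
  refine (pi_norm_le_iff_of_nonneg (norm_nonneg _)).2 fun i => ?_
  calc ‖(clampE v - clampE w) i‖ = |clamp01 (v i) - clamp01 (w i)| := rfl
    _ ≤ |v i - w i| := abs_clamp01_sub _ _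
    _ = ‖(v - w) i‖ := rfl
    _ ≤ ‖v - w‖ := norm_le_pi_norm _ i

lemma mem_simplex_iff {d : ℕ} (v : Fin d → ℝ) :
    v ∈ stdSimplex ℝ (Fin d) ↔ (∀ i, 0 ≤ v i) ∧ ∑ i, v i = 1 := Iff.rfl

lemma simplex_coord_le_one {d : ℕ} {v : Fin d → ℝ} (hv : v ∈ stdSimplex ℝ (Fin d)) (i : Fin d) :
    v i ≤ 1 := by
  rw [← hv.2]
  exact Finset.single_le_sum (fun j _ => hv.1 j) (Finset.mem_univ i)

lemma norm_le_one_of_mem_simplex {d : ℕ} {v : Fin d → ℝ} (hv : v ∈ stdSimplex ℝ (Fin d)) :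
    ‖v‖ ≤ 1 := by
  refine (pi_norm_le_iff_of_nonneg zero_le_one).2 fun i => ?_
  rw [Real.norm_eq_abs, abs_le]
  exact ⟨by linarith [hv.1 i], simplex_coord_le_one hv i⟩

lemma clampE_eq_self {d : ℕ} {v : Fin d → ℝ} (hv : v ∈ stdSimplex ℝ (Fin d)) :
    clampE v = v := by
  funext i; exact clamp01_eq_self (hv.1 i) (simplex_coord_le_one hv i)

/-- the clamp of `θ` to `[-r,0]`. -/
lemma seg_apply {d : ℕ} (r : ℝ) (z : ℝ → Fin d → ℝ) (s θ : ℝ) :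
    seg r z s θ = z (s + max (min θ 0) (-r)) := rfl

lemma clampI_mem {r : ℝ} (hr : 0 < r) (θ : ℝ) : max (min θ 0) (-r) ∈ Icc (-r) (0:ℝ) :=
  ⟨le_max_right _ _, max_le (min_le_right _ _) (by linarith)⟩

lemma clampI_eq_self {r : ℝ} {θ : ℝ} (hθ : θ ∈ Icc (-r) (0:ℝ)) :
    max (min θ 0) (-r) = θ := by
  rw [min_eq_left hθ.2, max_eq_left hθ.1]

lemma seg_arg_mem {r : ℝ} (hr : 0 < r) (s θ : ℝ) :
    s + max (min θ 0) (-r) ∈ Icc (s - r) s := by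
  have := clampI_mem hr θ
  exact ⟨by linarith [this.1], by linarith [this.2]⟩

lemma continuous_seg {d : ℕ} (r : ℝ) {z : ℝ → Fin d → ℝ} (hz : Continuous z) (s : ℝ) :
    Continuous (seg r z s) := by
  exact hz.comp (continuous_const.add ((continuous_id.min continuous_const).max continuous_const))

lemma seg_congr {d : ℕ} {r : ℝ} (hr : 0 < r) {z z' : ℝ → Fin d → ℝ} {s : ℝ}
    (h : ∀ u ∈ Icc (s - r) s, z u = z' u) : seg r z s = seg r z' s := by
  funext θ; exact h _ (seg_arg_mem hr s θ)


/-- One-sided mean value estimate: derivative `≤ c` on the open interval gives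
`f b - f a ≤ c * (b - a)`. -/
lemma le_of_deriv_le {f f' : ℝ → ℝ} {a b c : ℝ} (hab : a ≤ b)
    (hcont : ContinuousOn f (Icc a b))
    (hderiv : ∀ t ∈ Ioo a b, HasDerivAt f (f' t) t)
    (hbound : ∀ t ∈ Ioo a b, f' t ≤ c) :
    f b - f a ≤ c * (b - a) := by
  set g : ℝ → ℝ := fun t => c * t - f t with hg
  have hgd : ∀ t ∈ Ioo a b, HasDerivAt g (c - f' t) t := by
    intro t ht
    have h := ((hasDerivAt_id t).const_mul c).sub (hderiv t ht)
    rw [mul_one] at h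
    exact h
  have hmono : MonotoneOn g (Icc a b) := by
    refine monotoneOn_of_deriv_nonneg (convex_Icc a b)
      ((continuous_const.mul continuous_id).continuousOn.sub hcont) ?_ ?_
    · intro t ht
      rw [interior_Icc] at ht
      exact (hgd t ht).differentiableAt.differentiableWithinAt
    · intro t ht
      rw [interior_Icc] at ht
      rw [(hgd t ht).deriv]
      linarith [hbound t ht]
  have := hmono (left_mem_Icc.2 hab) (right_mem_Icc.2 hab) hab
  simp only [hg] at this
  linarith

lemma abs_sub_le_of_abs_deriv_le {f f' : ℝ → ℝ} {a b c : ℝ} (hab : a ≤ b)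
    (hcont : ContinuousOn f (Icc a b))
    (hderiv : ∀ t ∈ Ioo a b, HasDerivAt f (f' t) t)
    (hbound : ∀ t ∈ Ioo a b, |f' t| ≤ c) :
    |f b - f a| ≤ c * (b - a) := by
  have h1 : f b - f a ≤ c * (b - a) :=
    le_of_deriv_le hab hcont hderiv fun t ht => (abs_le.1 (hbound t ht)).2
  have h2 : (-f) b - (-f) a ≤ c * (b - a) := by
    refine le_of_deriv_le hab hcont.neg (fun t ht => (hderiv t ht).neg) fun t ht => ?_
    have := (abs_le.1 (hbound t ht)).1; linarith
  rw [abs_le]; constructor <;> simp only [Pi.neg_apply] at h2 <;> linarith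

/-- Comparison lemma: if `f a ≤ 0` and `f' ≤ c` whenever `f ≥ 0`, then `f b ≤ c (b-a)`. -/
lemma nonpos_growth {f f' : ℝ → ℝ} {a b c : ℝ} (hab : a ≤ b) (hc : 0 ≤ c)
    (hcont : ContinuousOn f (Icc a b))
    (hderiv : ∀ t ∈ Ioo a b, HasDerivAt f (f' t) t)
    (ha : f a ≤ 0)
    (hbound : ∀ t ∈ Ioo a b, 0 ≤ f t → f' t ≤ c) :
    f b ≤ c * (b - a) := by
  by_contra hcon
  push_neg at hcon
  have hfb : 0 < f b := lt_of_le_of_lt (by nlinarith) hcon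
  set S : Set ℝ := {u | u ∈ Icc a b ∧ f u ≤ 0} with hS
  have hSne : S.Nonempty := ⟨a, ⟨left_mem_Icc.2 hab, ha⟩⟩
  have hSbdd : BddAbove S := ⟨b, fun u hu => hu.1.2⟩
  have hSclosed : IsClosed S := by
    have : S = Icc a b ∩ f ⁻¹' (Iic 0) := by ext u; simp [hS, and_comm]
    rw [this]
    exact hcont.preimage_isClosed_of_isClosed isClosed_Icc isClosed_Iic
  obtain ⟨hsIcc, hsf⟩ : sSup S ∈ S := hSclosed.csSup_mem hSne hSbdd
  set s := sSup S
  have hsb : s ≤ b := hsIcc.2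
  have hsa : a ≤ s := hsIcc.1
  have hpos : ∀ u ∈ Ioc s b, 0 < f u := by
    intro u hu
    by_contra hc2
    push_neg at hc2
    have : u ∈ S := ⟨⟨le_trans hsa hu.1.le, hu.2⟩, hc2⟩
    exact absurd (le_csSup hSbdd this) (not_le.2 hu.1)
  have key : f b - f s ≤ c * (b - s) := by
    refine le_of_deriv_le hsb (hcont.mono (Icc_subset_Icc hsa le_rfl))
      (fun t ht => hderiv t ⟨lt_of_le_of_lt hsa ht.1, ht.2⟩) fun t ht => ?_
    exact hbound t ⟨lt_of_le_of_lt hsa ht.1, ht.2⟩ (hpos t ⟨ht.1, ht.2.le⟩).le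
  have : c * (b - s) ≤ c * (b - a) := by nlinarith
  linarith

/-- Projection onto the simplex (valid near the simplex): positive parts renormalised. -/
noncomputable def projS {d : ℕ} (v : Fin d → ℝ) : Fin d → ℝ :=
  fun i => (∑ j, max (v j) 0)⁻¹ * max (v i) 0

/-- the "violation" functional. -/
def viol {d : ℕ} (v : Fin d → ℝ) : ℝ := (∑ i, max (-v i) 0) + |∑ i, v i - 1|

lemma viol_nonneg {d : ℕ} (v : Fin d → ℝ) : 0 ≤ viol v := by
  have : (0:ℝ) ≤ ∑ i, max (-v i) 0 :=
    Finset.sum_nonneg fun i _ => le_max_right _ _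
  have := abs_nonneg (∑ i, v i - 1)
  unfold viol; linarith

lemma viol_eq_zero {d : ℕ} {v : Fin d → ℝ} (hv : viol v = 0) : v ∈ stdSimplex ℝ (Fin d) := by
  have h1 : (0:ℝ) ≤ ∑ i, max (-v i) 0 := Finset.sum_nonneg fun i _ => le_max_right _ _
  have h2 : (0:ℝ) ≤ |∑ i, v i - 1| := abs_nonneg _
  unfold viol at hv
  have hsum0 : ∑ i, max (-v i) 0 = 0 := by linarith
  have habs : |∑ i, v i - 1| = 0 := by linarith
  constructor
  · intro i
    have hle : max (-v i) 0 ≤ 0 := by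
      have := Finset.single_le_sum (f := fun i => max (-v i) 0)
        (fun j _ => le_max_right _ _) (Finset.mem_univ i)
      linarith
    have := le_max_left (-v i) 0
    linarith
  · have := abs_eq_zero.1 habs; linarith

lemma viol_eq_zero_of_mem {d : ℕ} {v : Fin d → ℝ} (hv : v ∈ stdSimplex ℝ (Fin d)) :
    viol v = 0 := by
  unfold viol
  have h1 : ∑ i, max (-v i) 0 = 0 := by
    refine Finset.sum_eq_zero fun i _ => max_eq_right (by linarith [hv.1 i])
  rw [h1, hv.2]; simp

lemma continuous_viol {d : ℕ} : Continuous (viol (d := d)) := by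
  unfold viol
  refine Continuous.add ?_ ?_
  · exact continuous_finset_sum _ fun i _ => ((continuous_apply i).neg.max continuous_const)
  · exact ((continuous_finset_sum _ fun i _ => continuous_apply i).sub continuous_const).abs


lemma sum_pos_part_eq {d : ℕ} (v : Fin d → ℝ) :
    ∑ j, max (v j) 0 = (∑ j, v j) + ∑ j, max (-v j) 0 := by
  rw [← Finset.sum_add_distrib]
  refine Finset.sum_congr rfl fun j _ => ?_
  rcases le_total (v j) 0 with h | h
  · rw [max_eq_right h, max_eq_left (by linarith)]; ring
  · rw [max_eq_left h, max_eq_right (by linarith)]; ring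

lemma abs_sum_pos_part_sub_one {d : ℕ} (v : Fin d → ℝ) :
    |(∑ j, max (v j) 0) - 1| ≤ viol v := by
  rw [sum_pos_part_eq]
  have h1 : (0:ℝ) ≤ ∑ j, max (-v j) 0 := Finset.sum_nonneg fun i _ => le_max_right _ _
  have h2 := abs_nonneg (∑ i, v i - 1)
  unfold viol
  rw [abs_le]
  constructor
  · have := neg_abs_le (∑ i, v i - 1); linarith
  · have := le_abs_self (∑ i, v i - 1); linarith

lemma sum_pos_part_ge {d : ℕ} {v : Fin d → ℝ} (hv : viol v ≤ 1/2) :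
    1/2 ≤ ∑ j, max (v j) 0 := by
  have := abs_sum_pos_part_sub_one v
  have := neg_abs_le ((∑ j, max (v j) 0) - 1)
  linarith [abs_sum_pos_part_sub_one v]

lemma projS_mem {d : ℕ} {v : Fin d → ℝ} (hv : viol v ≤ 1/2) :
    projS v ∈ stdSimplex ℝ (Fin d) := by
  have hs : 1/2 ≤ ∑ j, max (v j) 0 := sum_pos_part_ge hv
  have hs0 : (∑ j, max (v j) 0) ≠ 0 := by linarith
  constructor
  · intro i
    have : (0:ℝ) ≤ (∑ j, max (v j) 0)⁻¹ := inv_nonneg.2 (by linarith)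
    exact mul_nonneg this (le_max_right _ _)
  · unfold projS
    rw [← Finset.mul_sum, inv_mul_cancel₀ hs0]

lemma projS_eq_self {d : ℕ} {v : Fin d → ℝ} (hv : v ∈ stdSimplex ℝ (Fin d)) :
    projS v = v := by
  have h1 : ∀ j, max (v j) 0 = v j := fun j => max_eq_left (hv.1 j)
  funext i
  unfold projS
  simp only [h1]
  rw [hv.2]
  simp

lemma projS_coord_zero {d : ℕ} {v : Fin d → ℝ} (i : Fin d) (hvi : v i ≤ 0) :
    projS v i = 0 := by
  unfold projS; rw [max_eq_right hvi, mul_zero]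

lemma coord_sub_one_le_viol {d : ℕ} (v : Fin d → ℝ) (i : Fin d) : v i - 1 ≤ viol v := by
  have hsplit : ∑ j ∈ Finset.univ.erase i, v j + v i = ∑ j, v j :=
    Finset.sum_erase_add _ _ (Finset.mem_univ i)
  have h1 : ∀ j ∈ Finset.univ.erase i, -(max (-v j) 0) ≤ v j := by
    intro j _
    have := le_max_left (-v j) 0
    linarith
  have h2 : ∑ j ∈ Finset.univ.erase i, -(max (-v j) 0) ≤ ∑ j ∈ Finset.univ.erase i, v j :=
    Finset.sum_le_sum h1
  have h3 : ∑ j ∈ Finset.univ.erase i, max (-v j) 0 ≤ ∑ j, max (-v j) 0 := by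
    refine Finset.sum_le_sum_of_subset_of_nonneg (Finset.subset_univ _) ?_
    intro j _ _; exact le_max_right _ _
  rw [Finset.sum_neg_distrib] at h2
  have h4 := le_abs_self (∑ j, v j - 1)
  unfold viol
  linarith

lemma clampE_sub_projS_le {d : ℕ} {v : Fin d → ℝ} (hv : viol v ≤ 1/2) :
    ‖clampE v - projS v‖ ≤ 6 * viol v := by
  have hviol := viol_nonneg v
  have hs : 1/2 ≤ ∑ j, max (v j) 0 := sum_pos_part_ge hv
  set s := ∑ j, max (v j) 0 with hsdef
  have hs1 : |s - 1| ≤ viol v := abs_sum_pos_part_sub_one v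
  refine (pi_norm_le_iff_of_nonneg (by linarith)).2 fun i => ?_
  set p := max (v i) 0 with hpdef
  have hp0 : 0 ≤ p := le_max_right _ _
  have hp1 : p ≤ 1 + viol v := by
    have := coord_sub_one_le_viol v i
    refine max_le (by linarith) (by linarith)
  have hclamp : clampE v i = min p 1 := by
    show clamp01 (v i) = min p 1
    unfold clamp01
    rcases le_total (v i) 0 with h | h
    · rw [min_eq_left (by linarith : v i ≤ 1), max_eq_right h,
        hpdef, max_eq_right h, min_eq_left (by norm_num : (0:ℝ) ≤ 1)]
    · rw [hpdef, max_eq_left h]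
      rcases le_total (v i) 1 with h' | h'
      · rw [min_eq_left h', max_eq_left h]
      · rw [min_eq_right h', max_eq_left (by norm_num : (0:ℝ) ≤ 1)]
  have hproj : projS v i = s⁻¹ * p := rfl
  have e1 : |min p 1 - p| ≤ viol v := by
    rcases le_total p 1 with h | h
    · rw [min_eq_left h]; simpa using hviol
    · rw [min_eq_right h, abs_sub_comm, abs_of_nonneg (by linarith)]; linarith
  have e2 : |p - s⁻¹ * p| ≤ 3 * viol v := by
    have hsne : s ≠ 0 := by linarith
    have : p - s⁻¹ * p = p * (s - 1) * s⁻¹ := by field_simp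
    rw [this, abs_mul, abs_mul]
    have hinv : |s⁻¹| ≤ 2 := by
      rw [abs_of_nonneg (inv_nonneg.2 (by linarith))]
      rw [inv_le_comm₀ (by linarith) (by norm_num)]
      linarith
    have hpabs : |p| ≤ 3/2 := by rw [abs_of_nonneg hp0]; linarith
    calc |p| * |s - 1| * |s⁻¹| ≤ (3/2) * viol v * 2 := by
          apply mul_le_mul (mul_le_mul hpabs hs1 (abs_nonneg _) (by norm_num)) hinv
            (abs_nonneg _) (by positivity)
      _ = 3 * viol v := by ring
  calc ‖(clampE v - projS v) i‖ = |min p 1 - s⁻¹ * p| := by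
        rw [show (clampE v - projS v) i = clampE v i - projS v i from rfl, hclamp, hproj,
          Real.norm_eq_abs]
    _ ≤ |min p 1 - p| + |p - s⁻¹ * p| := abs_sub_le _ _ _
    _ ≤ 6 * viol v := by linarith

lemma continuousAt_projS {d : ℕ} {v : Fin d → ℝ} (hv : viol v ≤ 1/2) :
    ContinuousAt projS v := by
  have hs : 1/2 ≤ ∑ j, max (v j) 0 := sum_pos_part_ge hv
  have hsum : Continuous fun w : Fin d → ℝ => ∑ j, max (w j) 0 :=
    continuous_finset_sum _ fun j _ => ((continuous_apply j).max continuous_const)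
  refine continuousAt_pi.2 fun i => ?_
  refine ContinuousAt.mul ?_ ((continuous_apply i).max continuous_const).continuousAt
  exact (hsum.continuousAt).inv₀ (by linarith)


/-- The globally Lipschitz modification `G` of `F`: precompose with clamping to the cube. -/
def Gfun {d : ℕ} (F : (ℝ → Fin d → ℝ) → Fin d → ℝ) (ψ : ℝ → Fin d → ℝ) : Fin d → ℝ :=
  F (fun θ => clampE (ψ θ))

lemma Gfun_eq_F {d : ℕ} (F : (ℝ → Fin d → ℝ) → Fin d → ℝ) {ψ : ℝ → Fin d → ℝ}
    (h : ∀ θ, ψ θ ∈ stdSimplex ℝ (Fin d)) : Gfun F ψ = F ψ := by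
  have hfe : (fun θ => clampE (ψ θ)) = ψ := funext fun θ => clampE_eq_self (h θ)
  unfold Gfun
  rw [hfe]

/-- The Lipschitz property of `F` on the unit ball, from `hFlip` at `M = 1`. -/
def LipK (d : ℕ) (r K : ℝ) (F : (ℝ → Fin d → ℝ) → Fin d → ℝ) : Prop :=
  ∀ ψ₁ ψ₂ : ℝ → Fin d → ℝ, ContinuousOn ψ₁ (Icc (-r) 0) → ContinuousOn ψ₂ (Icc (-r) 0) →
    (∀ θ ∈ Icc (-r) 0, ‖ψ₁ θ‖ ≤ 1) → (∀ θ ∈ Icc (-r) 0, ‖ψ₂ θ‖ ≤ 1) →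
    ∀ C : ℝ, 0 ≤ C → (∀ θ ∈ Icc (-r) 0, ‖ψ₁ θ - ψ₂ θ‖ ≤ C) →
      ‖F ψ₁ - F ψ₂‖ ≤ K * C

lemma Gseg_lip {d : ℕ} {r K : ℝ} {F : (ℝ → Fin d → ℝ) → Fin d → ℝ}
    (hr : 0 < r) (hK : LipK d r K F) {z z' : ℝ → Fin d → ℝ}
    (hz : Continuous z) (hz' : Continuous z') (s : ℝ) {C : ℝ} (hC : 0 ≤ C)
    (hdist : ∀ u ∈ Icc (s - r) s, ‖z u - z' u‖ ≤ C) :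
    ‖Gfun F (seg r z s) - Gfun F (seg r z' s)‖ ≤ K * C := by
  refine hK _ _ ?_ ?_ ?_ ?_ C hC ?_
  · exact (continuous_clampE.comp (continuous_seg r hz s)).continuousOn
  · exact (continuous_clampE.comp (continuous_seg r hz' s)).continuousOn
  · exact fun θ _ => norm_clampE_le_one _
  · exact fun θ _ => norm_clampE_le_one _
  · intro θ _
    calc ‖clampE (seg r z s θ) - clampE (seg r z' s θ)‖ ≤ ‖seg r z s θ - seg r z' s θ‖ :=
          norm_clampE_sub_le _ _
      _ ≤ C := hdist _ (seg_arg_mem hr s θ)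

lemma Gfun_norm_le {d : ℕ} {r K : ℝ} {F : (ℝ → Fin d → ℝ) → Fin d → ℝ}
    (hK : LipK d r K F) (w0 : Fin d → ℝ) (hw0 : ‖w0‖ ≤ 1)
    {ψ : ℝ → Fin d → ℝ} (hψ : ContinuousOn ψ (Icc (-r) 0)) :
    ‖Gfun F ψ‖ ≤ ‖F (fun _ => w0)‖ + K * 2 := by
  have h := hK (fun θ => clampE (ψ θ)) (fun _ => w0)
    (continuous_clampE.comp_continuousOn hψ) continuousOn_const
    (fun θ _ => norm_clampE_le_one _) (fun θ _ => hw0) 2 (by norm_num)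
    (fun θ _ => by
      calc ‖clampE (ψ θ) - w0‖ ≤ ‖clampE (ψ θ)‖ + ‖w0‖ := norm_sub_le _ _
        _ ≤ 2 := by linarith [norm_clampE_le_one (ψ θ)])
  calc ‖Gfun F ψ‖ ≤ ‖F (fun _ => w0)‖ + ‖Gfun F ψ - F (fun _ => w0)‖ := norm_le_insert' _ _
    _ ≤ ‖F (fun _ => w0)‖ + K * 2 := by unfold Gfun; linarith

/-- The continuity property of `F`, as in the theorem statement. -/
def ContF (d : ℕ) (r : ℝ) (F : (ℝ → Fin d → ℝ) → Fin d → ℝ) : Prop :=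
  ∀ ψ : ℝ → Fin d → ℝ, ContinuousOn ψ (Icc (-r) 0) →
    ∀ ε : ℝ, 0 < ε → ∃ δ : ℝ, 0 < δ ∧ ∀ ψ' : ℝ → Fin d → ℝ,
      ContinuousOn ψ' (Icc (-r) 0) →
      (∀ θ ∈ Icc (-r) 0, ‖ψ θ - ψ' θ‖ ≤ δ) → ‖F ψ - F ψ'‖ < ε

/-- time-continuity of `s ↦ G(x_s)`. -/
lemma continuous_Gseg {d : ℕ} {r : ℝ} {F : (ℝ → Fin d → ℝ) → Fin d → ℝ}
    (hr : 0 < r) (hFc : ContF d r F) {z : ℝ → Fin d → ℝ} (hz : Continuous z) :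
    Continuous fun s => Gfun F (seg r z s) := by
  rw [continuous_iff_continuousAt]
  intro s₀
  rw [Metric.continuousAt_iff]
  intro ε hε
  obtain ⟨δ, hδ, hδprop⟩ := hFc (fun θ => clampE (seg r z s₀ θ))
    ((continuous_clampE.comp (continuous_seg r hz s₀)).continuousOn) ε hε
  have hcz : UniformContinuousOn z (Icc (s₀ - r - 1) (s₀ + 1)) :=
    isCompact_Icc.uniformContinuousOn_of_continuous hz.continuousOn
  rw [Metric.uniformContinuousOn_iff] at hcz
  obtain ⟨δ', hδ', hδ'prop⟩ := hcz δ hδ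
  refine ⟨min δ' 1, by positivity, fun {s} hs => ?_⟩
  have hs1 : |s - s₀| < δ' := lt_of_lt_of_le (by rwa [Real.dist_eq] at hs) (min_le_left _ _)
  have hs2 : |s - s₀| ≤ 1 := le_of_lt (lt_of_lt_of_le (by rwa [Real.dist_eq] at hs) (min_le_right _ _))
  rw [dist_eq_norm]
  rw [show Gfun F (seg r z s) - Gfun F (seg r z s₀)
      = -(Gfun F (seg r z s₀) - Gfun F (seg r z s)) by ring, norm_neg]
  refine hδprop _ ((continuous_clampE.comp (continuous_seg r hz s)).continuousOn) ?_
  intro θ hθ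
  have harg := clampI_mem hr θ
  set c := max (min θ 0) (-r) with hc
  have h1 : s₀ + c ∈ Icc (s₀ - r - 1) (s₀ + 1) := by
    constructor <;> [linarith [harg.1]; linarith [harg.2]]
  have h2 : s + c ∈ Icc (s₀ - r - 1) (s₀ + 1) := by
    rcases abs_le.1 hs2 with ⟨hl, hu⟩
    constructor <;> [linarith [harg.1]; linarith [harg.2]]
  have hd : dist (s₀ + c) (s + c) < δ' := by
    rw [Real.dist_eq]
    simpa [abs_sub_comm] using hs1
  have := hδ'prop _ h1 _ h2 hd
  rw [dist_eq_norm] at this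
  calc ‖clampE (seg r z s₀ θ) - clampE (seg r z s θ)‖
      ≤ ‖seg r z s₀ θ - seg r z s θ‖ := norm_clampE_sub_le _ _
    _ ≤ δ := le_of_lt this


open MeasureTheory intervalIntegral in
/-- One Picard step of length `(2K)⁻¹` via the Banach fixed point theorem. -/
lemma step_exist {d : ℕ} {r K B : ℝ} {F : (ℝ → Fin d → ℝ) → Fin d → ℝ}
    (hr : 0 < r) (hK0 : 0 < K) (hK : LipK d r K F) (hFc : ContF d r F)
    (hB0 : 0 ≤ B)
    (hB : ∀ ψ : ℝ → Fin d → ℝ, ContinuousOn ψ (Icc (-r) 0) → ‖Gfun F ψ‖ ≤ B)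
    (t₀ : ℝ) (w : BoundedContinuousFunction ℝ (Fin d → ℝ)) :
    ∃ u : BoundedContinuousFunction ℝ (Fin d → ℝ),
      (∀ t, t ≤ t₀ → u t = w t) ∧
      ∀ t, u t = w (min t t₀) +
        ∫ s in t₀..(max t₀ (min t (t₀ + (2*K)⁻¹))), Gfun F (seg r (u : ℝ → Fin d → ℝ) s) := by
  set η : ℝ := (2*K)⁻¹ with hη
  have hη0 : 0 < η := by positivity
  set S : Set (BoundedContinuousFunction ℝ (Fin d → ℝ)) := {u | ∀ t ≤ t₀, u t = w t} with hSdef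
  have hSclosed : IsClosed S := by
    have : S = ⋂ t ∈ Iic t₀, {u : BoundedContinuousFunction ℝ (Fin d → ℝ) | u t = w t} := by
      ext u; simp [hSdef, Set.mem_iInter, mem_Iic]
    rw [this]
    exact isClosed_biInter fun t _ =>
      isClosed_eq ((continuous_apply t).comp BoundedContinuousFunction.continuous_coe) continuous_const
  haveI : CompleteSpace S := hSclosed.completeSpace_coe
  haveI : Nonempty S := ⟨⟨w, fun _ _ => rfl⟩⟩
  set cl : ℝ → ℝ := fun t => max t₀ (min t (t₀ + η)) with hcl
  have hclcont : Continuous cl := continuous_const.max (continuous_id.min continuous_const)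
  have hclmem : ∀ t, cl t ∈ Icc t₀ (t₀ + η) :=
    fun t => ⟨le_max_left _ _, max_le (by linarith) (min_le_right _ _)⟩
  have hcl_le : ∀ t, t ≤ t₀ → cl t = t₀ := fun t ht => by
    rw [hcl]; simp only [max_eq_left_iff]; exact min_le_of_left_le ht
  -- the Picard operator
  have hgc : ∀ u : S, Continuous fun s => Gfun F (seg r ((u : BoundedContinuousFunction ℝ (Fin d → ℝ)) : ℝ → Fin d → ℝ) s) :=
    fun u => continuous_Gseg hr hFc (u : BoundedContinuousFunction ℝ (Fin d → ℝ)).continuous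
  have hgb : ∀ (u : S) (s : ℝ),
      ‖Gfun F (seg r ((u : BoundedContinuousFunction ℝ (Fin d → ℝ)) : ℝ → Fin d → ℝ) s)‖ ≤ B :=
    fun u s => hB _ (continuous_seg r (u : BoundedContinuousFunction ℝ (Fin d → ℝ)).continuous s).continuousOn
  have hIntNorm : ∀ (u : S) (t : ℝ),
      ‖∫ s in t₀..(cl t), Gfun F (seg r ((u : BoundedContinuousFunction ℝ (Fin d → ℝ)) : ℝ → Fin d → ℝ) s)‖ ≤ B * η := by
    intro u t
    have h1 : ‖∫ s in t₀..(cl t), Gfun F (seg r ((u : BoundedContinuousFunction ℝ (Fin d → ℝ)) : ℝ → Fin d → ℝ) s)‖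
        ≤ B * |cl t - t₀| :=
      intervalIntegral.norm_integral_le_of_norm_le_const fun s _ => hgb u s
    have h2 : |cl t - t₀| ≤ η := by
      rw [abs_of_nonneg (by linarith [(hclmem t).1])]
      linarith [(hclmem t).2]
    calc _ ≤ B * |cl t - t₀| := h1
      _ ≤ B * η := by nlinarith
  set Φf : S → ℝ → Fin d → ℝ := fun u t =>
    w (min t t₀) + ∫ s in t₀..(cl t), Gfun F (seg r ((u : BoundedContinuousFunction ℝ (Fin d → ℝ)) : ℝ → Fin d → ℝ) s) with hΦf
  have hΦcont : ∀ u : S, Continuous (Φf u) := by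
    intro u
    refine Continuous.add (w.continuous.comp (continuous_id.min continuous_const)) ?_
    exact (continuous_primitive (fun a b => (hgc u).intervalIntegrable a b) t₀).comp hclcont
  have hΦbdd : ∀ (u : S) (t : ℝ), ‖Φf u t‖ ≤ ‖w‖ + B * η := by
    intro u t
    refine (norm_add_le _ _).trans (add_le_add ?_ (hIntNorm u t))
    exact w.norm_coe_le_norm _
  set Φ : S → S := fun u =>
    ⟨BoundedContinuousFunction.ofNormedAddCommGroup (Φf u) (hΦcont u) _ (hΦbdd u),
      by
        intro t ht
        show Φf u t = w t
        rw [hΦf]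
        simp only [min_eq_left ht, hcl_le t ht, intervalIntegral.integral_same, add_zero]⟩ with hΦ
  have hΦapp : ∀ (u : S) (t : ℝ), (Φ u : BoundedContinuousFunction ℝ (Fin d → ℝ)) t = Φf u t :=
    fun u t => rfl
  have hcontr : ∀ u v : S, dist (Φ u) (Φ v) ≤ 2⁻¹ * dist u v := by
    intro u v
    rw [Subtype.dist_eq]
    refine (BoundedContinuousFunction.dist_le (by positivity)).2 fun t => ?_
    rw [hΦapp, hΦapp, hΦf]
    simp only
    rw [dist_add_left, dist_eq_norm, ← intervalIntegral.integral_sub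
      ((hgc u).intervalIntegrable _ _) ((hgc v).intervalIntegrable _ _)]
    have hpt : ∀ s ∈ Set.uIoc t₀ (cl t),
        ‖Gfun F (seg r ((u : BoundedContinuousFunction ℝ (Fin d → ℝ)) : ℝ → Fin d → ℝ) s)
          - Gfun F (seg r ((v : BoundedContinuousFunction ℝ (Fin d → ℝ)) : ℝ → Fin d → ℝ) s)‖
          ≤ K * dist u v := by
      intro s _
      refine Gseg_lip hr hK (u : BoundedContinuousFunction ℝ (Fin d → ℝ)).continuous
        (v : BoundedContinuousFunction ℝ (Fin d → ℝ)).continuous s dist_nonneg ?_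
      intro τ _
      rw [← dist_eq_norm]
      calc dist ((u : BoundedContinuousFunction ℝ (Fin d → ℝ)) τ)
            ((v : BoundedContinuousFunction ℝ (Fin d → ℝ)) τ)
          ≤ dist (u : BoundedContinuousFunction ℝ (Fin d → ℝ))
            (v : BoundedContinuousFunction ℝ (Fin d → ℝ)) :=
            BoundedContinuousFunction.dist_coe_le_dist τ
        _ = dist u v := (Subtype.dist_eq u v).symm
    have h2 : |cl t - t₀| ≤ η := by
      rw [abs_of_nonneg (by linarith [(hclmem t).1])]
      linarith [(hclmem t).2]
    calc ‖∫ s in t₀..(cl t), _‖ ≤ K * dist u v * |cl t - t₀| :=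
          intervalIntegral.norm_integral_le_of_norm_le_const hpt
      _ ≤ K * dist u v * η := by
          have hnn : 0 ≤ K * dist u v := mul_nonneg hK0.le dist_nonneg
          exact mul_le_mul_of_nonneg_left h2 hnn
      _ = 2⁻¹ * dist u v := by rw [hη]; field_simp
  have hlip : LipschitzWith (2⁻¹ : NNReal) Φ := by
    refine LipschitzWith.of_dist_le_mul fun u v => ?_
    have : ((2⁻¹ : NNReal) : ℝ) = 2⁻¹ := by norm_num
    rw [this]
    exact hcontr u v
  have hCW : ContractingWith (2⁻¹ : NNReal) Φ := by
    refine ⟨?_, hlip⟩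
    rw [← NNReal.coe_lt_coe]
    push_cast
    norm_num
  set fp := hCW.fixedPoint Φ with hfp
  have hfix : Φ fp = fp := hCW.fixedPoint_isFixedPt
  refine ⟨(fp : BoundedContinuousFunction ℝ (Fin d → ℝ)), fp.2, fun t => ?_⟩
  conv_lhs => rw [← hfix]
  rw [hΦapp, hΦf]


open MeasureTheory intervalIntegral in
lemma hasDerivAt_of_inteq {d : ℕ} {r : ℝ} {F : (ℝ → Fin d → ℝ) → Fin d → ℝ}
    (hr : 0 < r) (hFc : ContF d r F) {u : ℝ → Fin d → ℝ} (hu : Continuous u) {T : ℝ}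
    (c : Fin d → ℝ) (heq : ∀ t ∈ Icc (0:ℝ) T, u t = c + ∫ s in (0:ℝ)..t, Gfun F (seg r u s))
    {t : ℝ} (ht : t ∈ Ioo (0:ℝ) T) : HasDerivAt u (Gfun F (seg r u t)) t := by
  set g : ℝ → Fin d → ℝ := fun s => Gfun F (seg r u s) with hg
  have hgc : Continuous g := continuous_Gseg hr hFc hu
  have h1 : HasDerivAt (fun τ => ∫ s in (0:ℝ)..τ, g s) (g t) t :=
    intervalIntegral.integral_hasDerivAt_right (hgc.intervalIntegrable _ _)
      (hgc.stronglyMeasurableAtFilter _ _) hgc.continuousAt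
  have h2 := h1.const_add c
  have hEq : u =ᶠ[nhds t] fun τ => c + ∫ s in (0:ℝ)..τ, g s := by
    filter_upwards [isOpen_Ioo.mem_nhds ht] with τ hτ
    exact heq τ (Ioo_subset_Icc_self hτ)
  exact h2.congr_of_eventuallyEq hEq

/-- Uniqueness for the modified equation `z' = G(z_t)`. -/
lemma uniq_G {d : ℕ} {r K : ℝ} {F : (ℝ → Fin d → ℝ) → Fin d → ℝ}
    (hr : 0 < r) (hK0 : 0 < K) (hK : LipK d r K F)
    {z₁ z₂ : ℝ → Fin d → ℝ} (h₁ : Continuous z₁) (h₂ : Continuous z₂)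
    (hpre : ∀ t ≤ (0:ℝ), z₁ t = z₂ t) {T : ℝ}
    (hd₁ : ∀ t ∈ Ioo (0:ℝ) T, HasDerivAt z₁ (Gfun F (seg r z₁ t)) t)
    (hd₂ : ∀ t ∈ Ioo (0:ℝ) T, HasDerivAt z₂ (Gfun F (seg r z₂ t)) t) :
    ∀ t ≤ T, z₁ t = z₂ t := by
  set η : ℝ := (2*K)⁻¹ with hη
  have hη0 : 0 < η := by positivity
  rcases le_or_gt T 0 with hT | hT
  · exact fun t ht => hpre t (le_trans ht hT)
  set h : ℝ → ℝ := fun s => ‖z₁ s - z₂ s‖ with hh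
  have hhc : Continuous h := (h₁.sub h₂).norm
  have step : ∀ a, 0 ≤ a → (∀ t ≤ a, z₁ t = z₂ t) → ∀ t ≤ min (a + η) T, z₁ t = z₂ t := by
    intro a ha hpre' t ht
    rcases le_or_gt t a with hta | hta
    · exact hpre' t hta
    set b := min (a + η) T with hb
    have hab : a ≤ b := le_trans hta.le ht
    obtain ⟨t₁, ht₁mem, ht₁max⟩ :=
      isCompact_Icc.exists_isMaxOn (nonempty_Icc.2 hab) hhc.continuousOn
    set H := h t₁ with hH
    have hH0 : 0 ≤ H := norm_nonneg _
    have hmax : ∀ s ∈ Icc a b, h s ≤ H := fun s hs => ht₁max hs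
    have hHle : H ≤ H / 2 := by
      have hcoord : ∀ i : Fin d, |z₁ t₁ i - z₂ t₁ i| ≤ H / 2 := by
        intro i
        set f : ℝ → ℝ := fun s => z₁ s i - z₂ s i with hf
        have hfa : f a = 0 := by rw [hf]; simp [hpre' a le_rfl]
        have hKH : ∀ s ∈ Ioo a t₁,
            ‖Gfun F (seg r z₁ s) - Gfun F (seg r z₂ s)‖ ≤ K * H := by
          intro s hs
          refine Gseg_lip hr hK h₁ h₂ s hH0 fun u hu => ?_
          rcases le_or_gt u a with hua | hua
          · rw [hpre' u hua]; simpa using hH0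
          · exact hmax u ⟨hua.le, le_trans hu.2 (le_trans hs.2.le ht₁mem.2)⟩
        have hder : ∀ s ∈ Ioo a t₁,
            HasDerivAt f ((Gfun F (seg r z₁ s) - Gfun F (seg r z₂ s)) i) s := by
          intro s hs
          have hs' : s ∈ Ioo (0:ℝ) T :=
            ⟨lt_of_le_of_lt ha hs.1, lt_of_lt_of_le hs.2 (le_trans ht₁mem.2 (min_le_right _ _))⟩
          exact (hasDerivAt_pi.1 (hd₁ s hs') i).sub (hasDerivAt_pi.1 (hd₂ s hs') i)
        have habs := abs_sub_le_of_abs_deriv_le (f := f) (f' := fun s =>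
            (Gfun F (seg r z₁ s) - Gfun F (seg r z₂ s)) i) ht₁mem.1
          (by exact ((continuous_apply i).comp (h₁.sub h₂)).continuousOn)
          hder
          (fun s hs => le_trans (le_trans (le_abs_self _)
            (by simpa using norm_le_pi_norm (Gfun F (seg r z₁ s) - Gfun F (seg r z₂ s)) i))
            (hKH s hs))
        have h3 : K * H * (t₁ - a) ≤ K * H * η := by
          have h6 : t₁ ≤ a + η := le_trans ht₁mem.2 (min_le_left _ _)
          exact mul_le_mul_of_nonneg_left (by linarith) (mul_nonneg hK0.le hH0)
        have h4 : K * H * η = H / 2 := by rw [hη]; field_simp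
        rw [hfa, sub_zero] at habs
        calc |z₁ t₁ i - z₂ t₁ i| ≤ K * H * (t₁ - a) := habs
          _ ≤ H / 2 := by rw [← h4]; exact h3
      calc H = ‖z₁ t₁ - z₂ t₁‖ := rfl
        _ ≤ H / 2 := by
            refine (pi_norm_le_iff_of_nonneg (by linarith)).2 fun i => ?_
            simpa using hcoord i
    have hHz : H ≤ 0 := by linarith
    have h7 : h t ≤ 0 := le_trans (hmax t ⟨hta.le, ht⟩) hHz
    have h8 : h t = 0 := le_antisymm h7 (norm_nonneg _)
    exact sub_eq_zero.1 (norm_eq_zero.1 h8)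
  have main : ∀ n : ℕ, ∀ t ≤ min ((n : ℝ) * η) T, z₁ t = z₂ t := by
    intro n
    induction n with
    | zero => intro t ht; exact hpre t (le_trans ht (by simp))
    | succ n ih =>
      intro t ht
      have ha : (0:ℝ) ≤ min ((n : ℝ) * η) T := le_min (by positivity) hT.le
      have h5 : min (((n:ℕ)+1 : ℝ) * η) T ≤ min ((n:ℝ)*η) T + η := by
        rcases le_total ((n:ℝ) * η) T with hcase | hcase
        · rw [min_eq_left hcase]
          calc min (((n:ℕ)+1:ℝ)*η) T ≤ ((n:ℕ)+1:ℝ)*η := min_le_left _ _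
            _ = (n:ℝ)*η + η := by push_cast; ring
        · rw [min_eq_right hcase]
          calc min (((n:ℕ)+1:ℝ)*η) T ≤ T := min_le_right _ _
            _ ≤ T + η := by linarith
      refine step (min ((n : ℝ) * η) T) ha ih t (le_trans ht ?_)
      push_cast
      push_cast at h5
      exact le_min h5 (min_le_right _ _)
  intro t ht
  obtain ⟨n, hn⟩ := exists_nat_ge (T / η)
  have : T ≤ (n : ℝ) * η := by
    rw [div_le_iff₀ hη0] at hn; linarith
  exact main n t (le_min (le_trans ht this) ht)


open intervalIntegral in
lemma exists_un {d : ℕ} {r K B : ℝ} {F : (ℝ → Fin d → ℝ) → Fin d → ℝ}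
    (hr : 0 < r) (hK0 : 0 < K) (hK : LipK d r K F) (hFc : ContF d r F)
    (hB0 : 0 ≤ B)
    (hB : ∀ ψ : ℝ → Fin d → ℝ, ContinuousOn ψ (Icc (-r) 0) → ‖Gfun F ψ‖ ≤ B)
    (φt : BoundedContinuousFunction ℝ (Fin d → ℝ)) (n : ℕ) :
    ∃ u : BoundedContinuousFunction ℝ (Fin d → ℝ),
      (∀ t ≤ (0:ℝ), u t = φt t) ∧
      (∀ t ∈ Icc (0:ℝ) ((n:ℝ) * (2*K)⁻¹),
        u t = φt 0 + ∫ s in (0:ℝ)..t, Gfun F (seg r (u : ℝ → Fin d → ℝ) s)) := by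
  set η : ℝ := (2*K)⁻¹ with hη
  have hη0 : 0 < η := by positivity
  induction n with
  | zero =>
    refine ⟨φt, fun _ _ => rfl, fun t ht => ?_⟩
    simp only [Nat.cast_zero, zero_mul] at ht
    have : t = 0 := le_antisymm ht.2 ht.1
    subst this
    simp
  | succ n ih =>
    obtain ⟨u, hupre, huint⟩ := ih
    set t₀ : ℝ := (n:ℝ) * η with ht₀def
    have ht₀0 : 0 ≤ t₀ := by positivity
    obtain ⟨u', hu'pre, hu'int⟩ := step_exist hr hK0 hK hFc hB0 hB t₀ u
    have hsegeq : ∀ s ≤ t₀, seg r (u' : ℝ → Fin d → ℝ) s = seg r (u : ℝ → Fin d → ℝ) s :=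
      fun s hs => seg_congr hr fun v hv => hu'pre v (le_trans hv.2 hs)
    have hIcongr : ∀ t, 0 ≤ t → t ≤ t₀ →
        (∫ s in (0:ℝ)..t, Gfun F (seg r (u : ℝ → Fin d → ℝ) s))
        = ∫ s in (0:ℝ)..t, Gfun F (seg r (u' : ℝ → Fin d → ℝ) s) := by
      intro t h0t htt₀
      refine intervalIntegral.integral_congr fun s hs => ?_
      rw [uIcc_of_le h0t] at hs
      rw [hsegeq s (le_trans hs.2 htt₀)]
    have hInt0 : ∀ t, 0 ≤ t → t ≤ t₀ →
        u' t = φt 0 + ∫ s in (0:ℝ)..t, Gfun F (seg r (u' : ℝ → Fin d → ℝ) s) := by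
      intro t h0t htt₀
      rw [hu'pre t htt₀, huint t ⟨h0t, htt₀⟩, hIcongr t h0t htt₀]
    refine ⟨u', fun t ht => (hu'pre t (le_trans ht ht₀0)).trans (hupre t ht), ?_⟩
    intro t ht
    have hcast : ((n:ℕ) + 1 : ℝ) * η = t₀ + η := by rw [ht₀def]; push_cast; ring
    rcases le_total t t₀ with hcase | hcase
    · exact hInt0 t ht.1 hcase
    · have htub : t ≤ t₀ + η := by
        have := ht.2; push_cast at this; linarith [this]
      have heq := hu'int t
      have h1 : min t t₀ = t₀ := min_eq_right hcase
      have h2 : max t₀ (min t (t₀ + (2*K)⁻¹)) = t := by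
        rw [← hη, min_eq_left htub, max_eq_right hcase]
      rw [h1, h2] at heq
      have hgc : Continuous fun s => Gfun F (seg r (u' : ℝ → Fin d → ℝ) s) :=
        continuous_Gseg hr hFc u'.continuous
      have hadd := intervalIntegral.integral_add_adjacent_intervals
        (a := (0:ℝ)) (b := t₀) (c := t) (μ := MeasureTheory.volume)
        (hgc.intervalIntegrable _ _) (hgc.intervalIntegrable _ _)
      rw [heq, ← hu'pre t₀ le_rfl, hInt0 t₀ ht₀0 le_rfl, add_assoc, hadd]

/-- Global existence for the modified equation. -/
lemma exists_x {d : ℕ} {r K B : ℝ} {F : (ℝ → Fin d → ℝ) → Fin d → ℝ}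
    (hr : 0 < r) (hK0 : 0 < K) (hK : LipK d r K F) (hFc : ContF d r F)
    (hB0 : 0 ≤ B)
    (hB : ∀ ψ : ℝ → Fin d → ℝ, ContinuousOn ψ (Icc (-r) 0) → ‖Gfun F ψ‖ ≤ B)
    (φt : BoundedContinuousFunction ℝ (Fin d → ℝ)) :
    ∃ x : ℝ → Fin d → ℝ, Continuous x ∧ (∀ t ≤ (0:ℝ), x t = φt t) ∧
      ∀ t, 0 < t → HasDerivAt x (Gfun F (seg r x t)) t := by
  set η : ℝ := (2*K)⁻¹ with hη
  have hη0 : 0 < η := by positivity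
  have hex := exists_un hr hK0 hK hFc hB0 hB φt
  set uSeq : ℕ → BoundedContinuousFunction ℝ (Fin d → ℝ) := fun n => (hex n).choose with huSeq
  have hpre : ∀ n : ℕ, ∀ t ≤ (0:ℝ), uSeq n t = φt t := fun n => (hex n).choose_spec.1
  have hint : ∀ n : ℕ, ∀ t ∈ Icc (0:ℝ) ((n:ℝ) * η),
      uSeq n t = φt 0 + ∫ s in (0:ℝ)..t, Gfun F (seg r (uSeq n : ℝ → Fin d → ℝ) s) :=
    fun n => (hex n).choose_spec.2
  have hder : ∀ n : ℕ, ∀ t ∈ Ioo (0:ℝ) ((n:ℝ)*η),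
      HasDerivAt (uSeq n : ℝ → Fin d → ℝ) (Gfun F (seg r (uSeq n : ℝ → Fin d → ℝ) t)) t :=
    fun n t ht => hasDerivAt_of_inteq hr hFc (uSeq n).continuous (φt 0) (hint n) ht
  have hcons : ∀ m n : ℕ, ∀ t, t ≤ (m:ℝ)*η → t ≤ (n:ℝ)*η → uSeq m t = uSeq n t := by
    intro m n t hm hn
    refine uniq_G hr hK0 hK (uSeq m).continuous (uSeq n).continuous
      (fun s hs => (hpre m s hs).trans (hpre n s hs).symm)
      (T := min ((m:ℝ)*η) ((n:ℝ)*η))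
      (fun s hs => hder m s ⟨hs.1, lt_of_lt_of_le hs.2 (min_le_left _ _)⟩)
      (fun s hs => hder n s ⟨hs.1, lt_of_lt_of_le hs.2 (min_le_right _ _)⟩)
      t (le_min hm hn)
  set N : ℝ → ℕ := fun t => ⌈(max t 0 + 1)/η⌉₊ with hN
  have hNlt : ∀ t, t < (N t : ℝ) * η := by
    intro t
    have h1 := Nat.le_ceil ((max t 0 + 1)/η)
    have h2 : max t 0 + 1 ≤ (N t : ℝ) * η := by
      rw [div_le_iff₀ hη0] at h1
      exact h1
    have := le_max_left t 0
    linarith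
  set x : ℝ → Fin d → ℝ := fun t => uSeq (N t) t with hx
  have hxeq : ∀ (n : ℕ) t, t ≤ (n:ℝ)*η → x t = uSeq n t :=
    fun n t ht => hcons (N t) n t (hNlt t).le ht
  have hxcont : Continuous x := by
    rw [continuous_iff_continuousAt]
    intro t₀
    have hev : x =ᶠ[nhds t₀] (uSeq (N t₀) : ℝ → Fin d → ℝ) := by
      filter_upwards [Iio_mem_nhds (hNlt t₀)] with s hs
      exact hxeq (N t₀) s (le_of_lt hs)
    exact ((uSeq (N t₀)).continuous.continuousAt).congr hev.symm
  refine ⟨x, hxcont, fun t ht => hxeq (N t) t (hNlt t).le ▸ hpre (N t) t ht, ?_⟩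
  intro t ht
  have hev : x =ᶠ[nhds t] (uSeq (N t) : ℝ → Fin d → ℝ) := by
    filter_upwards [Iio_mem_nhds (hNlt t)] with s hs
    exact hxeq (N t) s (le_of_lt hs)
  have hd := hder (N t) t ⟨ht, hNlt t⟩
  have hd' : HasDerivAt x (Gfun F (seg r (uSeq (N t) : ℝ → Fin d → ℝ) t)) t :=
    hd.congr_of_eventuallyEq hev
  have hseg : seg r x t = seg r (uSeq (N t) : ℝ → Fin d → ℝ) t :=
    seg_congr hr fun v hv => hxeq (N t) v (le_trans hv.2 (hNlt t).le)
  rw [hseg]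
  exact hd'


/-- Forward invariance of the simplex for the modified equation. -/
lemma invariance {d : ℕ} {r K : ℝ} {F : (ℝ → Fin d → ℝ) → Fin d → ℝ}
    (hr : 0 < r) (hd1 : 1 ≤ d) (hK0 : 0 < K) (hK : LipK d r K F)
    (hFpos : ∀ ψ : ℝ → Fin d → ℝ, ContinuousOn ψ (Icc (-r) 0) →
      (∀ θ ∈ Icc (-r) 0, ψ θ ∈ stdSimplex ℝ (Fin d)) →
      ∀ i, ψ 0 i = 0 → 0 ≤ F ψ i)
    (hFsum : ∀ ψ : ℝ → Fin d → ℝ, ContinuousOn ψ (Icc (-r) 0) →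
      (∀ θ ∈ Icc (-r) 0, ψ θ ∈ stdSimplex ℝ (Fin d)) →
      ∑ i, F ψ i = 0)
    {x : ℝ → Fin d → ℝ} (hxc : Continuous x)
    (hder : ∀ t, 0 < t → HasDerivAt x (Gfun F (seg r x t)) t)
    (hpre : ∀ t ≤ (0:ℝ), x t ∈ stdSimplex ℝ (Fin d)) :
    ∀ t, x t ∈ stdSimplex ℝ (Fin d) := by
  set η : ℝ := (24 * d * K)⁻¹ with hη
  have hd0 : (0:ℝ) < d := by exact_mod_cast lt_of_lt_of_le zero_lt_one (by exact_mod_cast hd1)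
  have hη0 : 0 < η := by rw [hη]; positivity
  set v : ℝ → ℝ := fun s => viol (x s) with hv
  have hvc : Continuous v := continuous_viol.comp hxc
  have step : ∀ t₀, 0 ≤ t₀ → (∀ s ≤ t₀, x s ∈ stdSimplex ℝ (Fin d)) →
      ∀ s ≤ t₀ + η, x s ∈ stdSimplex ℝ (Fin d) := by
    intro t₀ ht₀0 hsimp
    have hv0 : ∀ s ≤ t₀, v s = 0 := fun s hs => viol_eq_zero_of_mem (hsimp s hs)
    set A : Set ℝ := {t' | t' ∈ Icc t₀ (t₀ + η) ∧ ∀ s ∈ Icc t₀ t', v s ≤ 1/2} with hA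
    have ht₀A : t₀ ∈ A := by
      refine ⟨⟨le_rfl, by linarith⟩, fun s hs => ?_⟩
      have : s = t₀ := le_antisymm hs.2 hs.1
      rw [this, hv0 t₀ le_rfl]; norm_num
    have hAne : A.Nonempty := ⟨t₀, ht₀A⟩
    have hAbdd : BddAbove A := ⟨t₀ + η, fun a ha => ha.1.2⟩
    set τ := sSup A with hτ
    have hτmem : τ ∈ Icc t₀ (t₀ + η) :=
      ⟨le_csSup hAbdd ht₀A, csSup_le hAne fun a ha => ha.1.2⟩
    have hsmall' : ∀ s ∈ Ico t₀ τ, v s ≤ 1/2 := by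
      intro s hs
      obtain ⟨a, haA, hsa⟩ := exists_lt_of_lt_csSup hAne hs.2
      exact haA.2 s ⟨hs.1, hsa.le⟩
    have hsmall : ∀ s ∈ Icc t₀ τ, v s ≤ 1/2 := by
      intro s hs
      rcases lt_or_eq_of_le hs.2 with hlt | heq
      · exact hsmall' s ⟨hs.1, hlt⟩
      · rcases eq_or_lt_of_le hs.1 with heq2 | hlt2
        · rw [← heq2, hv0 t₀ le_rfl]; norm_num
        · have htend : Filter.Tendsto v (nhdsWithin s (Iio s)) (nhds (v s)) :=
            (hvc.tendsto s).mono_left nhdsWithin_le_nhds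
          refine le_of_tendsto htend ?_
          filter_upwards [Filter.inter_mem
            (mem_nhdsWithin_of_mem_nhds (Ioi_mem_nhds hlt2)) self_mem_nhdsWithin]
            with u hu
          refine hsmall' u ⟨hu.1.le, ?_⟩
          rw [← heq]
          exact hu.2
    -- the maximum of the violation on [t₀, τ]
    obtain ⟨t₁, ht₁mem, ht₁max⟩ :=
      isCompact_Icc.exists_isMaxOn (nonempty_Icc.2 hτmem.1) hvc.continuousOn
    set V := v t₁ with hV
    have hV0 : 0 ≤ V := viol_nonneg _
    have hmax : ∀ s ∈ Icc t₀ τ, v s ≤ V := fun s hs => ht₁max hs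
    -- violation bound on segments
    have hviolseg : ∀ t ∈ Ioc t₀ τ, ∀ θ ∈ Icc (-r) (0:ℝ), viol (seg r x t θ) ≤ 1/2 := by
      intro t ht θ hθ
      rw [seg_apply, clampI_eq_self hθ]
      rcases le_or_gt (t + θ) t₀ with hc | hc
      · rw [show viol (x (t + θ)) = v (t + θ) from rfl, hv0 _ hc]; norm_num
      · exact hsmall _ ⟨hc.le, by linarith [hθ.2, ht.2]⟩
    have hviolsegV : ∀ t ∈ Ioc t₀ τ, ∀ θ ∈ Icc (-r) (0:ℝ), viol (seg r x t θ) ≤ V := by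
      intro t ht θ hθ
      rw [seg_apply, clampI_eq_self hθ]
      rcases le_or_gt (t + θ) t₀ with hc | hc
      · rw [show viol (x (t + θ)) = v (t + θ) from rfl, hv0 _ hc]; exact hV0
      · exact hmax _ ⟨hc.le, by linarith [hθ.2, ht.2]⟩
    have hsegcont : ∀ t, ContinuousOn (seg r x t) (Icc (-r) (0:ℝ)) :=
      fun t => (continuous_seg r hxc t).continuousOn
    have hprojcont : ∀ t ∈ Ioc t₀ τ,
        ContinuousOn (fun θ => projS (seg r x t θ)) (Icc (-r) (0:ℝ)) := by
      intro t ht θ hθ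
      exact (continuousAt_projS (hviolseg t ht θ hθ)).comp_continuousWithinAt
        ((hsegcont t) θ hθ)
    have hprojmem : ∀ t ∈ Ioc t₀ τ, ∀ θ ∈ Icc (-r) (0:ℝ),
        projS (seg r x t θ) ∈ stdSimplex ℝ (Fin d) :=
      fun t ht θ hθ => projS_mem (hviolseg t ht θ hθ)
    -- distance between G and F at projected segment
    have hFdiff : ∀ t ∈ Ioc t₀ τ,
        ‖Gfun F (seg r x t) - F (fun θ => projS (seg r x t θ))‖ ≤ K * (6 * V) := by
      intro t ht
      refine hK _ _ (continuous_clampE.comp_continuousOn (hsegcont t)) (hprojcont t ht)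
        (fun θ _ => norm_clampE_le_one _)
        (fun θ hθ => norm_le_one_of_mem_simplex (hprojmem t ht θ hθ))
        (6 * V) (by linarith) ?_
      intro θ hθ
      show ‖clampE (seg r x t θ) - projS (seg r x t θ)‖ ≤ 6 * V
      rcases le_or_gt (t + max (min θ 0) (-r)) t₀ with hc | hc
      · have hmem : seg r x t θ ∈ stdSimplex ℝ (Fin d) := hsimp _ hc
        rw [clampE_eq_self hmem, projS_eq_self hmem, sub_self, norm_zero]
        linarith
      · calc ‖clampE (seg r x t θ) - projS (seg r x t θ)‖ ≤ 6 * viol (seg r x t θ) :=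
              clampE_sub_projS_le (hviolseg t ht θ hθ)
          _ ≤ 6 * V := by linarith [hviolsegV t ht θ hθ]
    have hsum0 : ∀ t ∈ Ioc t₀ τ, ∑ i, F (fun θ => projS (seg r x t θ)) i = 0 :=
      fun t ht => hFsum _ (hprojcont t ht) (hprojmem t ht)
    -- bound |σ(t₁) - 1|
    have hsigma : |(∑ i, x t₁ i) - 1| ≤ (d * (K * (6 * V))) * (t₁ - t₀) := by
      have hgder : ∀ t ∈ Ioo t₀ t₁, HasDerivAt (fun s => ∑ i, x s i)
          (∑ i, Gfun F (seg r x t) i) t := by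
        intro t htt
        exact HasDerivAt.fun_sum fun i _ =>
          hasDerivAt_pi.1 (hder t (lt_of_le_of_lt ht₀0 htt.1)) i
      have hgb : ∀ t ∈ Ioo t₀ t₁, |∑ i, Gfun F (seg r x t) i| ≤ d * (K * (6 * V)) := by
        intro t htt
        have htIoc : t ∈ Ioc t₀ τ := ⟨htt.1, le_trans htt.2.le ht₁mem.2⟩
        have heq : ∑ i, Gfun F (seg r x t) i
            = ∑ i, (Gfun F (seg r x t) i - F (fun θ => projS (seg r x t θ)) i) := by
          rw [Finset.sum_sub_distrib, hsum0 t htIoc, sub_zero]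
        rw [heq]
        calc |∑ i, (Gfun F (seg r x t) i - F (fun θ => projS (seg r x t θ)) i)|
            ≤ ∑ i, |Gfun F (seg r x t) i - F (fun θ => projS (seg r x t θ)) i| :=
              Finset.abs_sum_le_sum_abs _ _
          _ ≤ ∑ _i : Fin d, K * (6 * V) := by
              refine Finset.sum_le_sum fun i _ => ?_
              calc |Gfun F (seg r x t) i - F (fun θ => projS (seg r x t θ)) i|
                  ≤ ‖Gfun F (seg r x t) - F (fun θ => projS (seg r x t θ))‖ := by
                    simpa using norm_le_pi_norm
                      (Gfun F (seg r x t) - F (fun θ => projS (seg r x t θ))) i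
                _ ≤ K * (6 * V) := hFdiff t htIoc
          _ = d * (K * (6 * V)) := by simp [Finset.sum_const, Finset.card_univ, mul_comm]
      have habs := abs_sub_le_of_abs_deriv_le (f := fun s => ∑ i, x s i)
        (f' := fun t => ∑ i, Gfun F (seg r x t) i) ht₁mem.1
        (continuousOn_finset_sum _ fun i _ => ((continuous_apply i).comp hxc).continuousOn)
        hgder hgb
      have hg0 : ∑ i, x t₀ i = 1 := (hsimp t₀ le_rfl).2
      have habs' : |(∑ i, x t₁ i) - ∑ i, x t₀ i| ≤ (d * (K * (6 * V))) * (t₁ - t₀) := habs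
      rw [hg0] at habs'
      exact habs'
    -- bound each negative part at t₁
    have hneg : ∀ i, max (-x t₁ i) 0 ≤ (K * (6 * V)) * (t₁ - t₀) := by
      intro i
      have hc0 : 0 ≤ K * (6 * V) := by positivity
      have hfb := nonpos_growth (f := fun s => -x s i)
        (f' := fun t => -(Gfun F (seg r x t) i)) ht₁mem.1 hc0
        (((continuous_apply i).comp hxc).neg.continuousOn)
        (fun t htt => (hasDerivAt_pi.1 (hder t (lt_of_le_of_lt ht₀0 htt.1)) i).neg)
        (by simpa using (hsimp t₀ le_rfl).1 i)
        ?_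
      · have h2 : (0:ℝ) ≤ K * (6 * V) * (t₁ - t₀) :=
          mul_nonneg hc0 (by linarith [ht₁mem.1])
        exact max_le hfb h2
      · intro t htt hxneg
        have htIoc : t ∈ Ioc t₀ τ := ⟨htt.1, le_trans htt.2.le ht₁mem.2⟩
        have hxti : x t i ≤ 0 := neg_nonneg.1 hxneg
        have hψ0 : (fun θ => projS (seg r x t θ)) 0 i = 0 := by
          have hseg0 : seg r x t 0 = x t := by
            rw [seg_apply]
            congr 1
            rw [min_self, max_eq_left (by linarith : -r ≤ (0:ℝ)), add_zero]
          simp only [hseg0]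
          exact projS_coord_zero i hxti
        have hFp : 0 ≤ F (fun θ => projS (seg r x t θ)) i :=
          hFpos _ (hprojcont t htIoc) (hprojmem t htIoc) i hψ0
        have hdiff : |Gfun F (seg r x t) i - F (fun θ => projS (seg r x t θ)) i|
            ≤ K * (6 * V) := by
          calc |Gfun F (seg r x t) i - F (fun θ => projS (seg r x t θ)) i|
              ≤ ‖Gfun F (seg r x t) - F (fun θ => projS (seg r x t θ))‖ := by
                simpa using norm_le_pi_norm
                  (Gfun F (seg r x t) - F (fun θ => projS (seg r x t θ))) i
            _ ≤ K * (6 * V) := hFdiff t htIoc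
        have := abs_le.1 hdiff
        show -(Gfun F (seg r x t) i) ≤ K * (6 * V)
        linarith [this.1, hFp]
    -- conclude V = 0
    have hVle : V ≤ V / 2 := by
      have ht₁η : t₁ - t₀ ≤ η := by
        have := ht₁mem.2; have := hτmem.2; linarith
      have hV1 : V = (∑ i, max (-x t₁ i) 0) + |∑ i, x t₁ i - 1| := rfl
      have hs1 : ∑ i, max (-x t₁ i) 0 ≤ (d:ℝ) * ((K * (6 * V)) * (t₁ - t₀)) := by
        calc ∑ i, max (-x t₁ i) 0 ≤ ∑ _i : Fin d, (K * (6 * V)) * (t₁ - t₀) :=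
              Finset.sum_le_sum fun i _ => hneg i
          _ = (d:ℝ) * ((K * (6 * V)) * (t₁ - t₀)) := by
              simp [Finset.sum_const, Finset.card_univ, mul_comm]
      have hs2 : |∑ i, x t₁ i - 1| ≤ (d * (K * (6 * V))) * (t₁ - t₀) := hsigma
      have hKV : (0:ℝ) ≤ d * K * V := by positivity
      have h12 : (d:ℝ) * ((K * (6 * V)) * (t₁ - t₀)) + (d * (K * (6 * V))) * (t₁ - t₀)
          ≤ 12 * (d * K * V) * η := by
        have h0 : (0:ℝ) ≤ 12 * (d * K * V) := by positivity
        have h1 : (t₁ - t₀) ≤ η := ht₁η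
        have h2 : (0:ℝ) ≤ t₁ - t₀ := by linarith [ht₁mem.1]
        nlinarith
      have hfin : 12 * (d * K * V) * η = V / 2 := by
        rw [hη]
        field_simp
        ring
      rw [hV1]
      calc (∑ i, max (-x t₁ i) 0) + |∑ i, x t₁ i - 1|
          ≤ (d:ℝ) * ((K * (6 * V)) * (t₁ - t₀)) + (d * (K * (6 * V))) * (t₁ - t₀) := by
            linarith
        _ ≤ 12 * (d * K * V) * η := h12
        _ = V / 2 := hfin
    have hVzero : V = 0 := by linarith
    have hΔτ : ∀ s ∈ Icc t₀ τ, x s ∈ stdSimplex ℝ (Fin d) := by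
      intro s hs
      refine viol_eq_zero (le_antisymm ?_ (viol_nonneg _))
      calc viol (x s) = v s := rfl
        _ ≤ V := hmax s hs
        _ = 0 := hVzero
    -- τ must be t₀ + η
    have hτeq : τ = t₀ + η := by
      by_contra hne
      have hτlt : τ < t₀ + η := lt_of_le_of_ne hτmem.2 hne
      have hvτ : v τ = 0 := by
        have := hΔτ τ ⟨hτmem.1, le_rfl⟩
        exact viol_eq_zero_of_mem this
      obtain ⟨δ, hδ0, hδ⟩ := Metric.continuousAt_iff.1 hvc.continuousAt (1/2) (by norm_num)
      set τ' := min (τ + δ/2) (t₀ + η) with hτ'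
      have hττ' : τ < τ' := lt_min (by linarith) hτlt
      have hτ'A : τ' ∈ A := by
        refine ⟨⟨le_trans hτmem.1 hττ'.le, min_le_right _ _⟩, fun s hs => ?_⟩
        rcases le_or_gt s τ with hsc | hsc
        · exact hsmall s ⟨hs.1, hsc⟩
        · have hd1 : dist s τ < δ := by
            rw [Real.dist_eq, abs_of_pos (by linarith)]
            have : s ≤ τ + δ/2 := le_trans hs.2 (min_le_left _ _)
            linarith
          have := hδ hd1
          rw [Real.dist_eq, hvτ, sub_zero] at this
          have := (abs_le.1 this.le).2
          linarith
      exact absurd (le_csSup hAbdd hτ'A) (not_le.2 hττ')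
    intro s hs
    rcases le_or_gt s t₀ with hc | hc
    · exact hsimp s hc
    · exact hΔτ s ⟨hc.le, by rw [hτeq]; exact hs⟩
  -- global induction
  have hind : ∀ n : ℕ, ∀ s ≤ (n:ℝ) * η, x s ∈ stdSimplex ℝ (Fin d) := by
    intro n
    induction n with
    | zero => intro s hs; exact hpre s (by simpa using hs)
    | succ n ih =>
      have := step ((n:ℝ)*η) (by positivity) ih
      intro s hs
      refine this s ?_
      push_cast at hs
      linarith
  intro t
  rcases le_or_gt t 0 with hc | hc
  · exact hpre t hc
  · obtain ⟨n, hn⟩ := exists_nat_ge (t / η)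
    refine hind n t ?_
    rw [div_le_iff₀ hη0] at hn
    linarith

end DelayODE








open DelayODE

/-- Global existence, uniqueness and forward invariance of the simplex for
the mean-field delay differential equation `x'(t) = F(x_t)`: if `F` is continuous and
locally Lipschitz on `C = C([-r,0], ℝ^d)` (with respect to the sup norm built from the max
norm on `ℝ^d`), is quasi-positive on simplex-valued segments (`Fᵢ(ψ) ≥ 0` when `ψ(0)ᵢ = 0`)
and has zero sum there, then for every simplex-valued continuous initial function `φ` there
is a unique continuous solution on `[−r,∞)` with initial segment `φ`, satisfying the
equation for `t > 0` and staying in the simplex for `t ≥ 0`. -/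
theorem stmt_0 (d : ℕ) (hd : 2 ≤ d) (r : ℝ) (hr : 0 < r)
    (F : (ℝ → Fin d → ℝ) → Fin d → ℝ)
    (hFcont : ∀ ψ : ℝ → Fin d → ℝ, ContinuousOn ψ (Icc (-r) 0) →
      ∀ ε : ℝ, 0 < ε → ∃ δ : ℝ, 0 < δ ∧ ∀ ψ' : ℝ → Fin d → ℝ,
        ContinuousOn ψ' (Icc (-r) 0) →
        (∀ θ ∈ Icc (-r) 0, ‖ψ θ - ψ' θ‖ ≤ δ) → ‖F ψ - F ψ'‖ < ε)
    (hFlip : ∀ M : ℝ, 0 < M → ∃ K : ℝ, 0 < K ∧ ∀ ψ₁ ψ₂ : ℝ → Fin d → ℝ,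
      ContinuousOn ψ₁ (Icc (-r) 0) → ContinuousOn ψ₂ (Icc (-r) 0) →
      (∀ θ ∈ Icc (-r) 0, ‖ψ₁ θ‖ ≤ M) → (∀ θ ∈ Icc (-r) 0, ‖ψ₂ θ‖ ≤ M) →
      ∀ C : ℝ, 0 ≤ C → (∀ θ ∈ Icc (-r) 0, ‖ψ₁ θ - ψ₂ θ‖ ≤ C) →
        ‖F ψ₁ - F ψ₂‖ ≤ K * C)
    (hFpos : ∀ ψ : ℝ → Fin d → ℝ, ContinuousOn ψ (Icc (-r) 0) →
      (∀ θ ∈ Icc (-r) 0, ψ θ ∈ stdSimplex ℝ (Fin d)) →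
      ∀ i, ψ 0 i = 0 → 0 ≤ F ψ i)
    (hFsum : ∀ ψ : ℝ → Fin d → ℝ, ContinuousOn ψ (Icc (-r) 0) →
      (∀ θ ∈ Icc (-r) 0, ψ θ ∈ stdSimplex ℝ (Fin d)) →
      ∑ i, F ψ i = 0)
    (φ : ℝ → Fin d → ℝ) (hφcont : ContinuousOn φ (Icc (-r) 0))
    (hφsimplex : ∀ θ ∈ Icc (-r) 0, φ θ ∈ stdSimplex ℝ (Fin d)) :
    ∃ x : ℝ → Fin d → ℝ,
      (ContinuousOn x (Ici (-r)) ∧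
        (∀ θ ∈ Icc (-r) 0, x θ = φ θ) ∧
        (∀ t : ℝ, 0 < t → HasDerivAt x (F (seg r x t)) t) ∧
        ∀ t : ℝ, 0 ≤ t → x t ∈ stdSimplex ℝ (Fin d)) ∧
      ∀ y : ℝ → Fin d → ℝ,
        (ContinuousOn y (Ici (-r)) ∧
          (∀ θ ∈ Icc (-r) 0, y θ = φ θ) ∧
          (∀ t : ℝ, 0 < t → HasDerivAt y (F (seg r y t)) t) ∧
          ∀ t : ℝ, 0 ≤ t → y t ∈ stdSimplex ℝ (Fin d)) →
        ∀ t : ℝ, -r ≤ t → y t = x t := by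
  obtain ⟨K, hK0, hKlip⟩ := hFlip 1 one_pos
  have hK : LipK d r K F := hKlip
  have hFc : ContF d r F := hFcont
  -- the extended initial condition
  set φtf : ℝ → Fin d → ℝ := fun t => φ (max (min t 0) (-r)) with hφtf
  have hclampc : Continuous fun t : ℝ => max (min t 0) (-r) :=
    (continuous_id.min continuous_const).max continuous_const
  have hφtfc : Continuous φtf :=
    hφcont.comp_continuous hclampc fun t => clampI_mem hr t
  have hφtfΔ : ∀ t, φtf t ∈ stdSimplex ℝ (Fin d) :=
    fun t => hφsimplex _ (clampI_mem hr t)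
  have hφtfnorm : ∀ t, ‖φtf t‖ ≤ 1 := fun t => norm_le_one_of_mem_simplex (hφtfΔ t)
  set φt : BoundedContinuousFunction ℝ (Fin d → ℝ) :=
    BoundedContinuousFunction.ofNormedAddCommGroup φtf hφtfc 1 hφtfnorm with hφt
  have hφtapp : ∀ t, φt t = φtf t := fun t => rfl
  -- bound on G
  have hφ0Δ : φ 0 ∈ stdSimplex ℝ (Fin d) := hφsimplex 0 ⟨by linarith, le_rfl⟩
  set B : ℝ := ‖F (fun _ => φ 0)‖ + K * 2 with hB
  have hB0 : 0 ≤ B := by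
    have := norm_nonneg (F (fun _ => φ 0)); rw [hB]; nlinarith
  have hBb : ∀ ψ : ℝ → Fin d → ℝ, ContinuousOn ψ (Icc (-r) 0) → ‖Gfun F ψ‖ ≤ B :=
    fun ψ hψ => Gfun_norm_le hK (φ 0) (norm_le_one_of_mem_simplex hφ0Δ) hψ
  -- global solution of the modified equation
  obtain ⟨x, hxc, hxpre, hxder⟩ := exists_x hr hK0 hK hFc hB0 hBb φt
  have hxpre' : ∀ t ≤ (0:ℝ), x t = φtf t := fun t ht => hxpre t ht
  have hxΔpre : ∀ t ≤ (0:ℝ), x t ∈ stdSimplex ℝ (Fin d) := by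
    intro t ht; rw [hxpre' t ht]; exact hφtfΔ t
  have hd1 : 1 ≤ d := le_trans one_le_two hd
  have hxΔ : ∀ t, x t ∈ stdSimplex ℝ (Fin d) :=
    invariance hr hd1 hK0 hK hFpos hFsum hxc hxder hxΔpre
  have hsegΔx : ∀ t, ∀ θ, seg r x t θ ∈ stdSimplex ℝ (Fin d) := fun t θ => hxΔ _
  have hGFx : ∀ t, Gfun F (seg r x t) = F (seg r x t) :=
    fun t => Gfun_eq_F F (hsegΔx t)
  have hxderF : ∀ t : ℝ, 0 < t → HasDerivAt x (F (seg r x t)) t := by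
    intro t ht; rw [← hGFx t]; exact hxder t ht
  have hxφ : ∀ θ ∈ Icc (-r) (0:ℝ), x θ = φ θ := by
    intro θ hθ
    rw [hxpre' θ hθ.2]
    show φ (max (min θ 0) (-r)) = φ θ
    rw [clampI_eq_self hθ]
  refine ⟨x, ⟨hxc.continuousOn, hxφ, hxderF, fun t _ => hxΔ t⟩, ?_⟩
  rintro y ⟨hyc, hyφ, hyder, hyΔ⟩ t hrt
  -- extend y continuously to all of ℝ
  set ty : ℝ → Fin d → ℝ := fun s => y (max s (-r)) with hty
  have htyc : Continuous ty :=
    hyc.comp_continuous (continuous_id.max continuous_const) fun s => mem_Ici.2 (le_max_right _ _)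
  have htyeq : ∀ s, -r ≤ s → ty s = y s := by
    intro s hs; rw [hty]; simp only [max_eq_left hs]
  have htypre : ∀ s ≤ (0:ℝ), ty s = x s := by
    intro s hs
    rw [hxpre' s hs]
    show ty s = φ (max (min s 0) (-r))
    rcases le_or_gt s (-r) with hc | hc
    · have h1 : ty s = y (-r) := by rw [hty]; simp only [max_eq_right hc]
      have h2 : max (min s 0) (-r) = -r := by
        rw [min_eq_left hs, max_eq_right hc]
      rw [h1, h2]
      exact hyφ (-r) ⟨le_rfl, by linarith⟩
    · have hmem : s ∈ Icc (-r) (0:ℝ) := ⟨hc.le, hs⟩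
      rw [htyeq s hc.le, clampI_eq_self hmem]
      exact hyφ s hmem
  have htyΔ : ∀ s, ty s ∈ stdSimplex ℝ (Fin d) := by
    intro s
    show y (max s (-r)) ∈ stdSimplex ℝ (Fin d)
    rcases le_or_gt 0 (max s (-r)) with hc | hc
    · exact hyΔ _ hc
    · have hmem : max s (-r) ∈ Icc (-r) (0:ℝ) := ⟨le_max_right _ _, hc.le⟩
      rw [hyφ _ hmem]
      exact hφsimplex _ hmem
  have htyder : ∀ s, 0 < s → HasDerivAt ty (Gfun F (seg r ty s)) s := by
    intro s hs
    have hev : ty =ᶠ[nhds s] y := by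
      filter_upwards [Ioi_mem_nhds hs] with u hu
      exact htyeq u (by have := mem_Ioi.1 hu; linarith)
    have hseg : seg r y s = seg r ty s := by
      refine seg_congr hr fun u hu => ?_
      exact (htyeq u (by linarith [hu.1])).symm
    have hd' : HasDerivAt ty (F (seg r y s)) s :=
      (hyder s hs).congr_of_eventuallyEq hev
    rw [hseg] at hd'
    have hG : Gfun F (seg r ty s) = F (seg r ty s) :=
      Gfun_eq_F F (fun θ => htyΔ (s + max (min θ 0) (-r)))
    rw [hG]
    exact hd'
  have huniq := uniq_G hr hK0 hK htyc hxc htypre (T := t + 1)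
    (fun s hs => htyder s hs.1) (fun s hs => hxder s hs.1) t (by linarith)
  rw [← htyeq t hrt]
  exact huniq
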